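/- arXiv:1412.4150 — 8 statements merged into one kernel-verified Lean document; each statement's English description precedes it below -/
import Mathlib

section
/- Let V be a finite-dimensional real normed vector space, Ω ⊆ V an open cone (i.e. c • x ∈ Ω for all c > 0 and x ∈ Ω), f : Ω → V positively homogeneous of degree −3 (f(c • x) = c⁻³ • f(x) for all c > 0 and x ∈ Ω), and h : Ω → ℝ a strictly positive, twice continuously differentiable function that is positively homogeneous of degree 1 (h(c • x) = c · h(x) for all c > 0 and x ∈ Ω). Let q : ℝ → Ω be twice differentiable with q''(t) = f(q(t)) for all t. Set φ(t) = h(q(t)) and q₁(t) = φ(t)⁻¹ • q(t). Then for all t: (i) h(q₁(t)) = 1, and (ii) defining u(t) = φ(t)² • q₁'(t), the function u is differentiable and φ(t)² • u'(t) = f(q₁(t)) − (φ(t)³ · φ''(t)) • q₁(t). -/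
/-- Central projection of a solution of `q'' = f(q)`, with `f`
positively homogeneous of degree `-3`, onto the screen `{h = 1}`:
setting `φ = h ∘ q` and `q₁ = φ⁻¹ • q`, one has `h(q₁) = 1`, and with
`u = φ² • q₁'` (the derivative in the rescaled time), the function `u` is
differentiable and `φ² • u' = f(q₁) - (φ³ φ'') • q₁`. -/
theorem stmt_0
    {V : Type*} [NormedAddCommGroup V] [NormedSpace ℝ V] [FiniteDimensional ℝ V]
    (Ω : Set V) (hΩopen : IsOpen Ω)
    (hΩcone : ∀ c : ℝ, 0 < c → ∀ x ∈ Ω, c • x ∈ Ω)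
    (f : V → V)
    (hfhom : ∀ c : ℝ, 0 < c → ∀ x ∈ Ω, f (c • x) = (c ^ 3)⁻¹ • f x)
    (h : V → ℝ)
    (hpos : ∀ x ∈ Ω, 0 < h x)
    (hC2 : ContDiffOn ℝ 2 h Ω)
    (hhom : ∀ c : ℝ, 0 < c → ∀ x ∈ Ω, h (c • x) = c * h x)
    (q : ℝ → V) (hqΩ : ∀ t, q t ∈ Ω)
    (hq1 : Differentiable ℝ q) (hq2 : Differentiable ℝ (deriv q))
    (heq : ∀ t, deriv (deriv q) t = f (q t))
    (φ : ℝ → ℝ) (hφ : ∀ t, φ t = h (q t))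
    (q₁ : ℝ → V) (hq₁ : ∀ t, q₁ t = (φ t)⁻¹ • q t)
    (u : ℝ → V) (hu : ∀ t, u t = (φ t) ^ 2 • deriv q₁ t) :
    ∀ t : ℝ,
      h (q₁ t) = 1 ∧
      DifferentiableAt ℝ u t ∧
      (φ t) ^ 2 • deriv u t =
        f (q₁ t) - ((φ t) ^ 3 * deriv (deriv φ) t) • q₁ t := by
  have hφf : φ = fun s => h (q s) := funext hφ
  have hφpos : ∀ s, 0 < φ s := fun s => (hφ s) ▸ hpos _ (hqΩ s)
  have hφne : ∀ s, φ s ≠ 0 := fun s => (hφpos s).ne'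
  -- φ is differentiable
  have hca : ∀ s, ContDiffAt ℝ 2 h (q s) :=
    fun s => hC2.contDiffAt (hΩopen.mem_nhds (hqΩ s))
  have hφd : ∀ s, HasDerivAt φ (fderiv ℝ h (q s) (deriv q s)) s := by
    intro s
    have h1 : HasFDerivAt h (fderiv ℝ h (q s)) (q s) :=
      ((hca s).differentiableAt (by norm_num)).hasFDerivAt
    have h2 := h1.comp_hasDerivAt s (hq1 s).hasDerivAt
    rw [hφf]; exact h2
  have hφdiff : Differentiable ℝ φ := fun s => (hφd s).differentiableAt
  have hφd' : ∀ s, HasDerivAt φ (deriv φ s) s := fun s => (hφdiff s).hasDerivAt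
  -- deriv φ is differentiable
  have hφ'eq : deriv φ = fun s => fderiv ℝ h (q s) (deriv q s) :=
    funext fun s => (hφd s).deriv
  have hφ'd : Differentiable ℝ (deriv φ) := by
    rw [hφ'eq]
    intro s
    have hF : DifferentiableAt ℝ (fun x => fderiv ℝ h (q x)) s := by
      have h3 : ContDiffAt ℝ 1 (fderiv ℝ h) (q s) :=
        (hca s).fderiv_right (by norm_num)
      exact (h3.differentiableAt (by norm_num)).comp s (hq1 s)
    exact hF.clm_apply (hq2 s)
  have hφ'd' : ∀ s, HasDerivAt (deriv φ) (deriv (deriv φ) s) s :=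
    fun s => (hφ'd s).hasDerivAt
  -- derivative of q₁
  have hq₁d : ∀ s, HasDerivAt q₁
      ((φ s)⁻¹ • deriv q s + (-deriv φ s / φ s ^ 2) • q s) s := by
    intro s
    have := ((hφd' s).inv (hφne s)).smul (hq1 s).hasDerivAt
    have hfe : q₁ = fun x => (φ x)⁻¹ • q x := funext hq₁
    rw [hfe]; exact this
  -- u equals φ • q' - φ' • q
  have huU : ∀ s, u s = φ s • deriv q s - deriv φ s • q s := by
    intro s
    rw [hu s, (hq₁d s).deriv, smul_add, smul_smul, smul_smul]
    have e1 : φ s ^ 2 * (φ s)⁻¹ = φ s := by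
      rw [pow_two, mul_assoc, mul_inv_cancel₀ (hφne s), mul_one]
    have e2 : φ s ^ 2 * (-deriv φ s / φ s ^ 2) = -deriv φ s := by
      rw [mul_comm, div_mul_cancel₀ _ (pow_ne_zero 2 (hφne s))]
    rw [e1, e2, neg_smul, ← sub_eq_add_neg]
  have hufun : u = fun s => φ s • deriv q s - deriv φ s • q s := funext huU
  intro t
  -- u is differentiable
  have hUd : HasDerivAt u
      ((φ t • deriv (deriv q) t + deriv φ t • deriv q t)
        - (deriv φ t • deriv q t + deriv (deriv φ) t • q t)) t := by
    rw [hufun]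
    exact ((hφd' t).smul (hq2 t).hasDerivAt).sub
      ((hφ'd' t).smul (hq1 t).hasDerivAt)
  refine ⟨?_, hUd.differentiableAt, ?_⟩
  · rw [hq₁ t, hhom (φ t)⁻¹ (inv_pos.2 (hφpos t)) _ (hqΩ t), ← hφ t,
      inv_mul_cancel₀ (hφne t)]
  · rw [hUd.deriv, hq₁ t, hfhom (φ t)⁻¹ (inv_pos.2 (hφpos t)) _ (hqΩ t)]
    have e3 : (((φ t)⁻¹) ^ 3)⁻¹ = (φ t) ^ 3 := by
      rw [← inv_pow, inv_inv]
    rw [e3, heq t, smul_smul]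
    have e4 : φ t ^ 3 * deriv (deriv φ) t * (φ t)⁻¹
        = φ t ^ 2 * deriv (deriv φ) t := by
      field_simp [hφne t]
    rw [e4]
    module
end

section
/- Let V be a finite-dimensional real normed vector space, Ω ⊆ V an open cone, f : Ω → V positively homogeneous of degree −3 (f(c • x) = c⁻³ • f(x) for all c > 0), and h : Ω → ℝ a strictly positive, twice continuously differentiable function that is positively homogeneous of degree 1. Let q : ℝ → Ω be twice differentiable with q''(t) = f(q(t)) for all t, and set φ(t) = h(q(t)) and q₁(t) = φ(t)⁻¹ • q(t). Suppose σ : ℝ → ℝ is twice differentiable and satisfies σ'(τ) = φ(σ(τ))² for all τ, and define Q(τ) = q₁(σ(τ)). Then for all τ: h(Q(τ)) = 1 and Q''(τ) = f(Q(τ)) + λ(τ) • Q(τ), where λ(τ) = −φ(σ(τ))³ · φ''(σ(τ)). -/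
/-- **Proposition 1 of the paper.** For a force field `f` positively
homogeneous of degree `-3`, the central projection `q₁ = q/h(q)` of a solution of
`q'' = f(q)`, reparametrized by the change of time `dt/dτ = h(q)²`, stays on the
screen `{h = 1}` and solves `Q'' = f(Q) + λ • Q` with `λ = -φ³ φ''`. -/
theorem stmt_1
    {V : Type*} [NormedAddCommGroup V] [NormedSpace ℝ V] [FiniteDimensional ℝ V]
    (Ω : Set V) (hΩopen : IsOpen Ω)
    (hΩcone : ∀ c : ℝ, 0 < c → ∀ x ∈ Ω, c • x ∈ Ω)
    (f : V → V)
    (hfhom : ∀ c : ℝ, 0 < c → ∀ x ∈ Ω, f (c • x) = (c ^ 3)⁻¹ • f x)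
    (h : V → ℝ)
    (hpos : ∀ x ∈ Ω, 0 < h x)
    (hC2 : ContDiffOn ℝ 2 h Ω)
    (hhom : ∀ c : ℝ, 0 < c → ∀ x ∈ Ω, h (c • x) = c * h x)
    (q : ℝ → V) (hqΩ : ∀ t, q t ∈ Ω)
    (hq1 : Differentiable ℝ q) (hq2 : Differentiable ℝ (deriv q))
    (heq : ∀ t, deriv (deriv q) t = f (q t))
    (φ : ℝ → ℝ) (hφ : ∀ t, φ t = h (q t))
    (q₁ : ℝ → V) (hq₁ : ∀ t, q₁ t = (φ t)⁻¹ • q t)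
    (σ : ℝ → ℝ) (hσ1 : Differentiable ℝ σ) (hσ2 : Differentiable ℝ (deriv σ))
    (hσeq : ∀ τ, deriv σ τ = (φ (σ τ)) ^ 2)
    (Q : ℝ → V) (hQ : ∀ τ, Q τ = q₁ (σ τ))
    (lam : ℝ → ℝ) (hlam : ∀ τ, lam τ = -((φ (σ τ)) ^ 3 * deriv (deriv φ) (σ τ))) :
    ∀ τ : ℝ,
      h (Q τ) = 1 ∧
      deriv (deriv Q) τ = f (Q τ) + lam τ • Q τ := by
  -- basic facts about `φ = h ∘ q`
  have hC2at : ∀ t, ContDiffAt ℝ 2 h (q t) := fun t =>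
    hC2.contDiffAt (hΩopen.mem_nhds (hqΩ t))
  have hApos : ∀ t, 0 < φ t := fun t => (hφ t) ▸ hpos _ (hqΩ t)
  have hAne : ∀ t, φ t ≠ 0 := fun t => (hApos t).ne'
  have hφfun : φ = fun t => h (q t) := funext hφ
  -- first derivative of φ
  set A' : ℝ → ℝ := fun t => fderiv ℝ h (q t) (deriv q t) with hA'def
  have hAderiv : ∀ t, HasDerivAt φ (A' t) t := by
    intro t
    rw [hφfun]
    exact (((hC2at t).differentiableAt two_ne_zero).hasFDerivAt).comp_hasDerivAt t
      (hq1 t).hasDerivAt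
  have hderivA : deriv φ = A' := funext fun t => (hAderiv t).deriv
  -- φ' is differentiable
  have hA'diff : ∀ t, DifferentiableAt ℝ A' t := by
    intro t
    exact ((((hC2at t).fderiv_right (le_refl 2)).differentiableAt one_ne_zero).comp t
      (hq1 t)).clm_apply (hq2 t)
  have hA'deriv : ∀ t, HasDerivAt A' (deriv A' t) t := fun t => (hA'diff t).hasDerivAt
  -- the curve on the screen and the "intermediate velocity" e
  have hQfun : Q = fun τ => (φ (σ τ))⁻¹ • q (σ τ) := funext fun τ => by
    rw [hQ τ, hq₁]
  set e : ℝ → V := fun t => (-(A' t)) • q t + φ t • deriv q t with hedef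
  -- derivative of q₁
  have hgderiv : ∀ t, HasDerivAt (fun t => (φ t)⁻¹ • q t)
      ((φ t)⁻¹ • deriv q t + (-(A' t) / φ t ^ 2) • q t) t := fun t =>
    ((hAderiv t).inv (hAne t)).smul (hq1 t).hasDerivAt
  -- first derivative of Q
  have hσd : ∀ τ, HasDerivAt σ ((φ (σ τ)) ^ 2) τ := fun τ =>
    (hσeq τ) ▸ (hσ1 τ).hasDerivAt
  have hQ1 : ∀ τ, HasDerivAt Q (e (σ τ)) τ := by
    intro τ
    rw [hQfun]
    have := (hgderiv (σ τ)).scomp τ (hσd τ)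
    have hval : (φ (σ τ)) ^ 2 • ((φ (σ τ))⁻¹ • deriv q (σ τ) +
        (-(A' (σ τ)) / φ (σ τ) ^ 2) • q (σ τ)) = e (σ τ) := by
      rw [hedef]
      have hne := hAne (σ τ)
      match_scalars <;> field_simp <;> ring
    rw [hval] at this
    exact this
  have hderivQ : deriv Q = fun τ => e (σ τ) := funext fun τ => (hQ1 τ).deriv
  -- derivative of e
  have hq2d : ∀ t, HasDerivAt (deriv q) (f (q t)) t := fun t =>
    (heq t) ▸ (hq2 t).hasDerivAt
  have hederiv : ∀ t, HasDerivAt e ((-(deriv A' t)) • q t + φ t • f (q t)) t := by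
    intro t
    have h1 : HasDerivAt (fun t => (-(A' t)) • q t)
        ((-(A' t)) • deriv q t + (-(deriv A' t)) • q t) t :=
      ((hA'deriv t).neg).smul (hq1 t).hasDerivAt
    have h2 : HasDerivAt (fun t => φ t • deriv q t)
        (φ t • f (q t) + A' t • deriv q t) t :=
      (hAderiv t).smul (hq2d t)
    have := h1.add h2
    have hval : (-(A' t)) • deriv q t + (-(deriv A' t)) • q t +
        (φ t • f (q t) + A' t • deriv q t) =
        (-(deriv A' t)) • q t + φ t • f (q t) := by
      match_scalars <;> ring
    rw [hval] at this
    exact this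
  -- second derivative of Q
  have hQ2 : ∀ τ, deriv (deriv Q) τ =
      (φ (σ τ)) ^ 2 • ((-(deriv A' (σ τ))) • q (σ τ) + φ (σ τ) • f (q (σ τ))) := by
    intro τ
    rw [hderivQ]
    exact ((hederiv (σ τ)).scomp τ (hσd τ)).deriv
  intro τ
  constructor
  · rw [hQ τ, hq₁]
    rw [hhom _ (inv_pos.2 (hApos (σ τ))) _ (hqΩ (σ τ)), hφ (σ τ),
      inv_mul_cancel₀ (hφ (σ τ) ▸ hAne (σ τ))]
  · rw [hQ2 τ, hQ τ, hq₁, hlam τ, hderivA]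
    rw [hfhom _ (inv_pos.2 (hApos (σ τ))) _ (hqΩ (σ τ))]
    have hne := hAne (σ τ)
    match_scalars <;> field_simp <;> ring
end

section
/- Let V be a finite-dimensional real normed vector space, Ω ⊆ V an open cone, and h : Ω → ℝ a twice continuously differentiable function that is positively homogeneous of degree 1 (h(c • x) = c · h(x) for all c > 0 and x ∈ Ω). Let f : Ω → V be continuous, λ : ℝ → ℝ, and Q : ℝ → Ω twice differentiable with h(Q(τ)) = 1 and Q''(τ) = f(Q(τ)) + λ(τ) • Q(τ) for all τ. Then the multiplier is uniquely determined by the constraint: λ(τ) = −Dh(Q(τ))[f(Q(τ))] − D²h(Q(τ))[Q'(τ), Q'(τ)] for all τ, where Dh and D²h denote the first and second Fréchet derivatives of h. -/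
/-- Euler's identity for positively 1-homogeneous functions. -/
lemma euler_identity
    {V : Type*} [NormedAddCommGroup V] [NormedSpace ℝ V]
    (Ω : Set V) (hΩopen : IsOpen Ω)
    (h : V → ℝ)
    (hhom : ∀ c : ℝ, 0 < c → ∀ x ∈ Ω, h (c • x) = c * h x)
    {x : V} (hx : x ∈ Ω) (hdiff : DifferentiableAt ℝ h x) :
    fderiv ℝ h x x = h x := by
  have hsmul : HasDerivAt (fun c : ℝ => c • x) x 1 := by
    simpa using (hasDerivAt_id (1:ℝ)).smul_const x
  have hx1 : HasFDerivAt h (fderiv ℝ h x) ((1:ℝ) • x) := by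
    rw [one_smul]; exact hdiff.hasFDerivAt
  have hcomp : HasDerivAt (fun c : ℝ => h (c • x)) (fderiv ℝ h x x) 1 :=
    hx1.comp_hasDerivAt 1 hsmul
  have hev : (fun c : ℝ => h (c • x)) =ᶠ[nhds (1:ℝ)] (fun c : ℝ => c * h x) := by
    filter_upwards [isOpen_Ioi.mem_nhds (by norm_num : (0:ℝ) < 1)] with c hc
    exact hhom c hc x hx
  have hcomp' : HasDerivAt (fun c : ℝ => c * h x) (fderiv ℝ h x x) 1 :=
    hcomp.congr_of_eventuallyEq hev.symm
  have hmul : HasDerivAt (fun c : ℝ => c * h x) (h x) 1 := by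
    simpa using (hasDerivAt_id (1:ℝ)).mul_const (h x)
  exact hcomp'.unique hmul

/-- In the constrained system `Q'' = f(Q) + λ • Q` on the screen
`{h = 1}` (with `h` positively homogeneous of degree 1 and `C²`), the multiplier is
uniquely determined by the constraint:
`λ = -Dh(Q)[f(Q)] - D²h(Q)[Q', Q']`. -/
theorem stmt_2
    {V : Type*} [NormedAddCommGroup V] [NormedSpace ℝ V] [FiniteDimensional ℝ V]
    (Ω : Set V) (hΩopen : IsOpen Ω)
    (hΩcone : ∀ c : ℝ, 0 < c → ∀ x ∈ Ω, c • x ∈ Ω)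
    (h : V → ℝ)
    (hC2 : ContDiffOn ℝ 2 h Ω)
    (hhom : ∀ c : ℝ, 0 < c → ∀ x ∈ Ω, h (c • x) = c * h x)
    (f : V → V) (hfcont : ContinuousOn f Ω)
    (lam : ℝ → ℝ)
    (Q : ℝ → V) (hQΩ : ∀ τ, Q τ ∈ Ω)
    (hQ1 : Differentiable ℝ Q) (hQ2 : Differentiable ℝ (deriv Q))
    (hcon : ∀ τ, h (Q τ) = 1)
    (heq : ∀ τ, deriv (deriv Q) τ = f (Q τ) + lam τ • Q τ) :
    ∀ τ : ℝ,
      lam τ = -(fderiv ℝ h (Q τ) (f (Q τ)))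
        - (fderiv ℝ (fderiv ℝ h) (Q τ) (deriv Q τ)) (deriv Q τ) := by
  -- differentiability facts
  have hdiff : ∀ x ∈ Ω, DifferentiableAt ℝ h x := fun x hx =>
    ((hC2.differentiableOn two_ne_zero) x hx).differentiableAt (hΩopen.mem_nhds hx)
  have hfd1 : ContDiffOn ℝ 1 (fderiv ℝ h) Ω :=
    hC2.fderiv_of_isOpen hΩopen (by norm_num)
  have hdiff2 : ∀ x ∈ Ω, DifferentiableAt ℝ (fderiv ℝ h) x := fun x hx =>
    ((hfd1.differentiableOn one_ne_zero) x hx).differentiableAt (hΩopen.mem_nhds hx)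
  -- first derivative of the constraint: Dh(Q)[Q'] = 0 for all τ
  have hfirst : ∀ τ, fderiv ℝ h (Q τ) (deriv Q τ) = 0 := by
    intro τ
    have hφ : HasDerivAt (fun t => h (Q t)) (fderiv ℝ h (Q τ) (deriv Q τ)) τ :=
      (hdiff _ (hQΩ τ)).hasFDerivAt.comp_hasDerivAt τ (hQ1 τ).hasDerivAt
    have hφ' : HasDerivAt (fun _ : ℝ => (1:ℝ)) (fderiv ℝ h (Q τ) (deriv Q τ)) τ := by
      refine hφ.congr_of_eventuallyEq ?_
      exact Filter.Eventually.of_forall fun t => (hcon t).symm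
    exact hφ'.unique (hasDerivAt_const τ 1)
  intro τ
  -- second derivative of the constraint
  have hA : HasDerivAt (fun t => fderiv ℝ h (Q t))
      (fderiv ℝ (fderiv ℝ h) (Q τ) (deriv Q τ)) τ :=
    (hdiff2 _ (hQΩ τ)).hasFDerivAt.comp_hasDerivAt τ (hQ1 τ).hasDerivAt
  have hB : HasDerivAt (deriv Q) (deriv (deriv Q) τ) τ := (hQ2 τ).hasDerivAt
  have hψ : HasDerivAt (fun t => fderiv ℝ h (Q t) (deriv Q t))
      ((fderiv ℝ (fderiv ℝ h) (Q τ) (deriv Q τ)) (deriv Q τ)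
        + fderiv ℝ h (Q τ) (deriv (deriv Q) τ)) τ := hA.clm_apply hB
  have hψ0 : (fderiv ℝ (fderiv ℝ h) (Q τ) (deriv Q τ)) (deriv Q τ)
        + fderiv ℝ h (Q τ) (deriv (deriv Q) τ) = 0 := by
    have hψ' : HasDerivAt (fun _ : ℝ => (0:ℝ)) _ τ :=
      hψ.congr_of_eventuallyEq (Filter.Eventually.of_forall fun t => (hfirst t).symm)
    exact hψ'.unique (hasDerivAt_const τ 0)
  -- Euler identity
  have heuler : fderiv ℝ h (Q τ) (Q τ) = 1 := by
    rw [euler_identity Ω hΩopen h hhom (hQΩ τ) (hdiff _ (hQΩ τ))]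
    exact hcon τ
  -- combine
  have hlin : fderiv ℝ h (Q τ) (deriv (deriv Q) τ)
      = fderiv ℝ h (Q τ) (f (Q τ)) + lam τ := by
    rw [heq τ, map_add, (fderiv ℝ h (Q τ)).map_smul, heuler]
    simp
  rw [hlin] at hψ0
  linarith
end

section
/- Let V be a real inner product space, U : V ∖ {0} → ℝ a differentiable function that is positively homogeneous of degree −2 (U(c • x) = c⁻² · U(x) for all c > 0 and x ≠ 0), and let ∇U denote its gradient with respect to the inner product. Let λ : ℝ → ℝ and let q : ℝ → V be twice differentiable with ⟪q(t), q(t)⟫ = 1 and q''(t) = ∇U(q(t)) + λ(t) • q(t) for all t. Then for all t: λ(t) = −2 · ((1/2) · ⟪q'(t), q'(t)⟫ − U(q(t))), i.e. the multiplier λ equals minus twice the energy (1/2)‖q'‖² − U(q). -/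
open scoped RealInnerProductSpace

/-- Euler's identity for degree `-2` homogeneous functions. -/
lemma euler_neg_two
    {V : Type*} [NormedAddCommGroup V] [InnerProductSpace ℝ V]
    (U : V → ℝ)
    (hUdiff : ∀ x : V, x ≠ 0 → DifferentiableAt ℝ U x)
    (hUhom : ∀ c : ℝ, 0 < c → ∀ x : V, x ≠ 0 → U (c • x) = (c ^ 2)⁻¹ * U x)
    (x : V) (hx : x ≠ 0) : fderiv ℝ U x x = -2 * U x := by
  have hsmul : HasDerivAt (fun c : ℝ => c • x) x 1 := by
    simpa using (hasDerivAt_id (1 : ℝ)).smul_const x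
  have hU : HasFDerivAt U (fderiv ℝ U x) x := (hUdiff x hx).hasFDerivAt
  have hcomp : HasDerivAt (fun c : ℝ => U (c • x)) (fderiv ℝ U x x) 1 := by
    have hU' : HasFDerivAt U (fderiv ℝ U x) ((1:ℝ) • x) := by rw [one_smul]; exact hU
    exact hU'.comp_hasDerivAt 1 hsmul
  have hrhs : HasDerivAt (fun c : ℝ => (c ^ 2)⁻¹ * U x) (-2 * U x) 1 := by
    have h1 : HasDerivAt (fun c : ℝ => (c ^ 2)⁻¹) (-2) 1 := by
      have : HasDerivAt (fun c : ℝ => c ^ 2) 2 1 := by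
        simpa using (hasDerivAt_pow 2 (1 : ℝ))
      exact (by simpa using this.inv (by norm_num) : HasDerivAt (fun c : ℝ => c ^ 2)⁻¹ (-2) 1)
    simpa [mul_comm] using h1.mul_const (U x)
  have heq : (fun c : ℝ => U (c • x)) =ᶠ[nhds (1 : ℝ)] fun c => (c ^ 2)⁻¹ * U x := by
    filter_upwards [eventually_gt_nhds (by norm_num : (0:ℝ) < 1)] with c hc
    exact hUhom c hc x hx
  have := (hrhs.congr_of_eventuallyEq heq).unique hcomp
  linarith

/-- **Proposition 2 of the paper.** For a potential `U` positively
homogeneous of degree `-2` on `V \ {0}`, a motion on the unit sphere satisfying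
`q'' = ∇U(q) + λ • q` has multiplier equal to minus twice the energy:
`λ = -2 ((1/2)‖q'‖² - U(q))`. -/
theorem stmt_4
    {V : Type*} [NormedAddCommGroup V] [InnerProductSpace ℝ V]
    (U : V → ℝ)
    (hUdiff : ∀ x : V, x ≠ 0 → DifferentiableAt ℝ U x)
    (hUhom : ∀ c : ℝ, 0 < c → ∀ x : V, x ≠ 0 → U (c • x) = (c ^ 2)⁻¹ * U x)
    (gradU : V → V)
    (hgrad : ∀ x : V, x ≠ 0 → ∀ v : V, ⟪gradU x, v⟫ = fderiv ℝ U x v)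
    (lam : ℝ → ℝ)
    (q : ℝ → V)
    (hq1 : Differentiable ℝ q) (hq2 : Differentiable ℝ (deriv q))
    (hcon : ∀ t, ⟪q t, q t⟫ = (1 : ℝ))
    (heq : ∀ t, deriv (deriv q) t = gradU (q t) + lam t • q t) :
    ∀ t : ℝ,
      lam t = -2 * ((1 / 2) * ⟪deriv q t, deriv q t⟫ - U (q t)) := by
  have hqne : ∀ t, q t ≠ 0 := by
    intro t h
    have := hcon t
    rw [h, inner_zero_left] at this
    norm_num at this
  -- first derivative of constraint
  have h1 : ∀ t, ⟪deriv q t, q t⟫ = 0 := by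
    intro t
    have hd : HasDerivAt (fun t => ⟪q t, q t⟫)
        (⟪q t, deriv q t⟫ + ⟪deriv q t, q t⟫) t :=
      ((hq1 t).hasDerivAt.inner (𝕜 := ℝ) (hq1 t).hasDerivAt)
    have hc : HasDerivAt (fun t => ⟪q t, q t⟫) 0 t := by
      have : (fun t => ⟪q t, q t⟫) = fun _ => (1 : ℝ) := funext hcon
      rw [this]; exact hasDerivAt_const t 1
    have := hd.unique hc
    have hcomm : ⟪q t, deriv q t⟫ = ⟪deriv q t, q t⟫ := real_inner_comm _ _
    linarith
  -- second derivative of constraint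
  intro t
  have h2 : ⟪deriv q t, deriv q t⟫ + ⟪deriv (deriv q) t, q t⟫ = 0 := by
    have hd : HasDerivAt (fun t => ⟪deriv q t, q t⟫)
        (⟪deriv q t, deriv q t⟫ + ⟪deriv (deriv q) t, q t⟫) t :=
      ((hq2 t).hasDerivAt.inner (𝕜 := ℝ) (hq1 t).hasDerivAt)
    have hc : HasDerivAt (fun t => ⟪deriv q t, q t⟫) 0 t := by
      have : (fun t => ⟪deriv q t, q t⟫) = fun _ => (0 : ℝ) := funext h1
      rw [this]; exact hasDerivAt_const t 0
    exact hd.unique hc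
  have heuler : ⟪gradU (q t), q t⟫ = -2 * U (q t) := by
    rw [hgrad (q t) (hqne t) (q t)]
    exact euler_neg_two U hUdiff hUhom (q t) (hqne t)
  have hqq : ⟪deriv (deriv q) t, q t⟫ = -2 * U (q t) + lam t := by
    rw [heq t, inner_add_left, inner_smul_left, heuler, hcon t]
    simp
  rw [hqq] at h2
  linarith
end

section
/- Let V be a real inner product space, U : V ∖ {0} → ℝ a continuously differentiable function that is positively homogeneous of degree −2 (U(c • x) = c⁻² · U(x) for all c > 0, x ≠ 0), with gradient ∇U with respect to the inner product. Let λ : ℝ → ℝ and q : ℝ → V be twice differentiable with ⟪q(t), q(t)⟫ = 1 and q''(t) = ∇U(q(t)) + λ(t) • q(t) for all t. Then the energy E(t) = (1/2) · ⟪q'(t), q'(t)⟫ − U(q(t)) is constant in t, and consequently the multiplier λ is constant in t. -/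
open scoped RealInnerProductSpace

/-- For a `C¹` potential `U` positively homogeneous of degree `-2`
on `V \ {0}`, along a motion on the unit sphere with `q'' = ∇U(q) + λ • q`,
the energy `E = (1/2)⟪q', q'⟫ - U(q)` is constant, and consequently the
multiplier `λ` is constant. -/
theorem stmt_6
    {V : Type*} [NormedAddCommGroup V] [InnerProductSpace ℝ V]
    (U : V → ℝ)
    (hUC1 : ContDiffOn ℝ 1 U {(0 : V)}ᶜ)
    (hUhom : ∀ c : ℝ, 0 < c → ∀ x : V, x ≠ 0 → U (c • x) = (c ^ 2)⁻¹ * U x)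
    (gradU : V → V)
    (hgrad : ∀ x : V, x ≠ 0 → ∀ v : V, ⟪gradU x, v⟫ = fderiv ℝ U x v)
    (lam : ℝ → ℝ)
    (q : ℝ → V)
    (hq1 : Differentiable ℝ q) (hq2 : Differentiable ℝ (deriv q))
    (hcon : ∀ t, ⟪q t, q t⟫ = (1 : ℝ))
    (heq : ∀ t, deriv (deriv q) t = gradU (q t) + lam t • q t) :
    ∀ t s : ℝ,
      ((1 / 2) * ⟪deriv q t, deriv q t⟫ - U (q t)
        = (1 / 2) * ⟪deriv q s, deriv q s⟫ - U (q s)) ∧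
      lam t = lam s := by
  have hne : ∀ t, q t ≠ 0 := by
    intro t h
    have := hcon t
    rw [h, inner_zero_left] at this
    norm_num at this
  have hUdiff : ∀ x : V, x ≠ 0 → DifferentiableAt ℝ U x := fun x hx =>
    (hUC1.contDiffAt (isOpen_compl_singleton.mem_nhds hx)).differentiableAt one_ne_zero
  -- Euler relation for homogeneity of degree -2
  have euler : ∀ x : V, x ≠ 0 → fderiv ℝ U x x = -2 * U x := by
    intro x hx
    have hs : HasDerivAt (fun c : ℝ => c • x) x 1 := by
      simpa using (hasDerivAt_id (1 : ℝ)).smul_const x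
    have hF : HasFDerivAt U (fderiv ℝ U x) ((1 : ℝ) • x) := by
      simpa using (hUdiff x hx).hasFDerivAt
    have h1 : HasDerivAt (fun c : ℝ => U (c • x)) (fderiv ℝ U x x) 1 := by
      have := hF.comp_hasDerivAt 1 hs
      simpa [Function.comp_def] using this
    have hinv : HasDerivAt (fun c : ℝ => ((c : ℝ) ^ 2)⁻¹) (-2) 1 := by
      have := (hasDerivAt_pow 2 (1 : ℝ)).inv (by norm_num)
      simpa [Pi.inv_def] using this
    have h2 : HasDerivAt (fun c : ℝ => ((c : ℝ) ^ 2)⁻¹ * U x) (-2 * U x) 1 :=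
      hinv.mul_const (U x)
    have heqv : (fun c : ℝ => U (c • x)) =ᶠ[nhds 1]
        (fun c : ℝ => ((c : ℝ) ^ 2)⁻¹ * U x) := by
      filter_upwards [eventually_gt_nhds (by norm_num : (0 : ℝ) < 1)] with c hc
      exact hUhom c hc x hx
    exact h1.unique (h2.congr_of_eventuallyEq heqv)
  have hq' : ∀ t, HasDerivAt q (deriv q t) t := fun t => (hq1 t).hasDerivAt
  have hq'' : ∀ t, HasDerivAt (deriv q) (deriv (deriv q) t) t := fun t =>
    (hq2 t).hasDerivAt
  -- orthogonality ⟪q, q'⟫ = 0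
  have horth : ∀ t, ⟪q t, deriv q t⟫ = 0 := by
    intro t
    have h := (hq' t).inner ℝ (hq' t)
    have hc : HasDerivAt (fun t => ⟪q t, q t⟫) 0 t := by
      have hfe : (fun t => ⟪q t, q t⟫) = fun _ : ℝ => (1 : ℝ) := funext hcon
      rw [hfe]; exact hasDerivAt_const t 1
    have hu := h.unique hc
    have hsym : ⟪deriv q t, q t⟫ = ⟪q t, deriv q t⟫ := real_inner_comm _ _
    linarith [hu, hsym]
  -- energy
  set E : ℝ → ℝ := fun t => (1 / 2) * ⟪deriv q t, deriv q t⟫ - U (q t) with hEdef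
  have hE0 : ∀ t, HasDerivAt E 0 t := by
    intro t
    have h1 := (hq'' t).inner ℝ (hq'' t)
    have h2 : HasDerivAt (fun t => U (q t)) (fderiv ℝ U (q t) (deriv q t)) t :=
      (hUdiff _ (hne t)).hasFDerivAt.comp_hasDerivAt t (hq' t)
    have h3 := (h1.const_mul (1 / 2 : ℝ)).sub h2
    have h0 : ⟪deriv q t, q t⟫ = (0 : ℝ) := by
      rw [real_inner_comm]; exact horth t
    have e1 : ⟪deriv q t, deriv (deriv q) t⟫ = ⟪gradU (q t), deriv q t⟫ := by
      rw [heq t, inner_add_right, real_inner_smul_right, h0, real_inner_comm]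
      ring
    have e2 : ⟪deriv (deriv q) t, deriv q t⟫ = ⟪gradU (q t), deriv q t⟫ := by
      rw [heq t, inner_add_left, real_inner_smul_left, horth t]
      ring
    have hval : (1 / 2 : ℝ) * (⟪deriv q t, deriv (deriv q) t⟫ +
        ⟪deriv (deriv q) t, deriv q t⟫) - fderiv ℝ U (q t) (deriv q t) = 0 := by
      rw [e1, e2, ← hgrad _ (hne t)]
      ring
    rw [← hval]
    exact h3
  have hEconst : ∀ t s, E t = E s := fun t s =>
    is_const_of_deriv_eq_zero (fun u => (hE0 u).differentiableAt)
      (fun u => (hE0 u).deriv) t s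
  -- lam = -2 E
  have hlam : ∀ t, lam t = -2 * E t := by
    intro t
    have h := (hq' t).inner ℝ (hq'' t)
    have hc : HasDerivAt (fun t => ⟪q t, deriv q t⟫) 0 t := by
      have hfe : (fun t => ⟪q t, deriv q t⟫) = fun _ : ℝ => (0 : ℝ) := funext horth
      rw [hfe]; exact hasDerivAt_const t 0
    have hu := h.unique hc
    -- hu : ⟪q t, deriv (deriv q) t⟫ + ⟪deriv q t, deriv q t⟫ = 0
    have h2 : ⟪q t, deriv (deriv q) t⟫ = -2 * U (q t) + lam t := by
      rw [heq t, inner_add_right, real_inner_smul_right, hcon t,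
        real_inner_comm, hgrad _ (hne t), euler _ (hne t)]
      ring
    have hE : E t = (1 / 2) * ⟪deriv q t, deriv q t⟫ - U (q t) := rfl
    rw [hE]
    linarith [hu, h2]
  intro t s
  refine ⟨hEconst t s, ?_⟩
  rw [hlam t, hlam s, hEconst t s]
end

section
/- Let V be a finite-dimensional real normed vector space, Ω ⊆ V an open cone, and f : Ω → V a differentiable map that is positively homogeneous of degree −3 (f(c • x) = c⁻³ • f(x) for all c > 0). On the phase space Ω × V define the vector fields X(q, p) = (p, f(q)), Y(q, p) = (q, −p), Z(q, p) = (0, q), and for differentiable vector fields A, B on Ω × V define the Lie bracket pointwise by [A, B](x) = DB(x)[A(x)] − DA(x)[B(x)], where D denotes the Fréchet derivative. Then at every point of Ω × V: [X, Y] = 2 • X, [Y, Z] = 2 • Z, and [Z, X] = Y. -/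
/-- Euler's identity for degree `-3` positively homogeneous maps. -/
lemma euler_deg_neg3
    {V : Type*} [NormedAddCommGroup V] [NormedSpace ℝ V]
    (Ω : Set V)
    (f : V → V)
    (hfdiff : ∀ x ∈ Ω, DifferentiableAt ℝ f x)
    (hfhom : ∀ c : ℝ, 0 < c → ∀ x ∈ Ω, f (c • x) = (c ^ 3)⁻¹ • f x)
    {q : V} (hq : q ∈ Ω) :
    fderiv ℝ f q q = (-3 : ℝ) • f q := by
  have hs : HasDerivAt (fun c : ℝ => c • q) q 1 := by
    simpa using (hasDerivAt_id (1 : ℝ)).smul_const q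
  have hdf : HasFDerivAt f (fderiv ℝ f q) ((1 : ℝ) • q) := by
    simpa using (hfdiff q hq).hasFDerivAt
  have h1 : HasDerivAt (fun c : ℝ => f (c • q)) (fderiv ℝ f q q) 1 :=
    hdf.comp_hasDerivAt 1 hs
  have hinv : HasDerivAt (fun c : ℝ => (c ^ 3)⁻¹) (-3) 1 := by
    have := (hasDerivAt_pow 3 (1 : ℝ)).inv (by norm_num)
    simpa [Pi.inv_def] using this
  have h2 : HasDerivAt (fun c : ℝ => (c ^ 3)⁻¹ • f q) ((-3 : ℝ) • f q) 1 :=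
    hinv.smul_const (f q)
  have heq : (fun c : ℝ => f (c • q)) =ᶠ[nhds (1 : ℝ)] fun c => (c ^ 3)⁻¹ • f q := by
    filter_upwards [isOpen_Ioi.eventually_mem (show (1 : ℝ) ∈ Set.Ioi 0 by norm_num)]
      with c hc
    exact hfhom c hc q hq
  have h2' : HasDerivAt (fun c : ℝ => f (c • q)) ((-3 : ℝ) • f q) 1 :=
    h2.congr_of_eventuallyEq heq
  exact h1.unique h2'

/-- On the phase space `Ω × V` of `q'' = f(q)`, with `f`
differentiable and positively homogeneous of degree `-3`, the vector fields
`X(q,p) = (p, f(q))`, `Y(q,p) = (q, -p)`, `Z(q,p) = (0, q)` satisfy the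
`sl₂` bracket relations `[X,Y] = 2X`, `[Y,Z] = 2Z`, `[Z,X] = Y`, where
`[A,B](x) = DB(x)[A(x)] - DA(x)[B(x)]`. -/
theorem stmt_7
    {V : Type*} [NormedAddCommGroup V] [NormedSpace ℝ V] [FiniteDimensional ℝ V]
    (Ω : Set V) (hΩopen : IsOpen Ω)
    (hΩcone : ∀ c : ℝ, 0 < c → ∀ x ∈ Ω, c • x ∈ Ω)
    (f : V → V)
    (hfdiff : ∀ x ∈ Ω, DifferentiableAt ℝ f x)
    (hfhom : ∀ c : ℝ, 0 < c → ∀ x ∈ Ω, f (c • x) = (c ^ 3)⁻¹ • f x)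
    (X Y Z : V × V → V × V)
    (hX : ∀ qp : V × V, X qp = (qp.2, f qp.1))
    (hY : ∀ qp : V × V, Y qp = (qp.1, -qp.2))
    (hZ : ∀ qp : V × V, Z qp = ((0 : V), qp.1))
    (bracket : (V × V → V × V) → (V × V → V × V) → (V × V → V × V))
    (hbracket : ∀ (A B : V × V → V × V) (x : V × V),
      bracket A B x = fderiv ℝ B x (A x) - fderiv ℝ A x (B x)) :
    ∀ qp : V × V, qp.1 ∈ Ω →
      bracket X Y qp = (2 : ℝ) • X qp ∧
      bracket Y Z qp = (2 : ℝ) • Z qp ∧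
      bracket Z X qp = Y qp := by
  intro qp hq
  have hXf : X = fun x : V × V => (x.2, f x.1) := funext hX
  have hYf : Y = fun x : V × V => (x.1, -x.2) := funext hY
  have hZf : Z = fun x : V × V => ((0 : V), x.1) := funext hZ
  -- derivatives
  have hDX : HasFDerivAt X
      ((ContinuousLinearMap.snd ℝ V V).prod
        ((fderiv ℝ f qp.1).comp (ContinuousLinearMap.fst ℝ V V))) qp := by
    rw [hXf]
    exact (hasFDerivAt_snd).prodMk
      (((hfdiff _ hq).hasFDerivAt).comp qp hasFDerivAt_fst)
  have hDY : HasFDerivAt Y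
      ((ContinuousLinearMap.fst ℝ V V).prod (-(ContinuousLinearMap.snd ℝ V V))) qp := by
    rw [hYf]
    exact hasFDerivAt_fst.prodMk hasFDerivAt_snd.neg
  have hDZ : HasFDerivAt Z
      ((0 : V × V →L[ℝ] V).prod (ContinuousLinearMap.fst ℝ V V)) qp := by
    rw [hZf]
    exact (hasFDerivAt_const (0 : V) qp).prodMk hasFDerivAt_fst
  have hE : fderiv ℝ f qp.1 qp.1 = (-3 : ℝ) • f qp.1 :=
    euler_deg_neg3 Ω f hfdiff hfhom hq
  refine ⟨?_, ?_, ?_⟩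
  · rw [hbracket, hDX.fderiv, hDY.fderiv, hX qp, hY qp]
    refine Prod.ext ?_ ?_ <;>
      simp only [ContinuousLinearMap.prod_apply, ContinuousLinearMap.coe_fst',
        ContinuousLinearMap.coe_snd', ContinuousLinearMap.neg_apply,
        ContinuousLinearMap.comp_apply, hE, Prod.smul_mk, Prod.mk_sub_mk] <;> module
  · rw [hbracket, hDY.fderiv, hDZ.fderiv, hY qp, hZ qp]
    refine Prod.ext ?_ ?_ <;>
      simp only [ContinuousLinearMap.prod_apply, ContinuousLinearMap.coe_fst',
        ContinuousLinearMap.coe_snd', ContinuousLinearMap.neg_apply,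
        ContinuousLinearMap.zero_apply, ContinuousLinearMap.comp_apply,
        Prod.smul_mk, Prod.mk_sub_mk] <;> module
  · rw [hbracket, hDZ.fderiv, hDX.fderiv, hZ qp, hX qp, hY qp]
    refine Prod.ext ?_ ?_ <;>
      simp only [ContinuousLinearMap.prod_apply, ContinuousLinearMap.coe_fst',
        ContinuousLinearMap.coe_snd', ContinuousLinearMap.zero_apply,
        ContinuousLinearMap.comp_apply, map_zero, Prod.mk_sub_mk] <;> module
end

section
/- Let V be a real inner product space and M : V →L[ℝ] V a continuous linear map that is symmetric with respect to the inner product (⟪M x, y⟫ = ⟪x, M y⟫ for all x, y). Let ν be a real constant, μ : ℝ → ℝ differentiable, and Q : ℝ → V twice differentiable with ⟪M Q(t), Q(t)⟫ = 1 and Q''(t) = μ(t) • M Q(t) + ν • Q(t) for all t. Then the Joachimsthal quantity η(t) = μ(t) · ⟪M Q(t), M Q(t)⟫² is constant in t. -/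
open scoped RealInnerProductSpace

/-- **Joachimsthal's constant.** For the Jacobi problem on the
ellipsoid `{⟪M Q, Q⟫ = 1}` with `M` symmetric, governed by
`Q'' = μ • M Q + ν • Q`, the quantity `η = μ ⟪M Q, M Q⟫²` is constant in time. -/
theorem stmt_9
    {V : Type*} [NormedAddCommGroup V] [InnerProductSpace ℝ V]
    (M : V →L[ℝ] V)
    (hM : ∀ x y : V, ⟪M x, y⟫ = ⟪x, M y⟫)
    (ν : ℝ) (μ : ℝ → ℝ) (hμ : Differentiable ℝ μ)
    (Q : ℝ → V)
    (hQ1 : Differentiable ℝ Q) (hQ2 : Differentiable ℝ (deriv Q))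
    (hcon : ∀ t, ⟪M (Q t), Q t⟫ = (1 : ℝ))
    (heq : ∀ t, deriv (deriv Q) t = μ t • M (Q t) + ν • Q t) :
    ∀ t s : ℝ,
      μ t * (⟪M (Q t), M (Q t)⟫ : ℝ) ^ 2 = μ s * (⟪M (Q s), M (Q s)⟫ : ℝ) ^ 2 := by
  set Q' := deriv Q with hQ'def
  set Q'' := deriv (deriv Q) with hQ''def
  have hQd : ∀ t, HasDerivAt Q (Q' t) t := fun t => (hQ1 t).hasDerivAt
  have hQ'd : ∀ t, HasDerivAt Q' (Q'' t) t := fun t => (hQ2 t).hasDerivAt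
  have hMQd : ∀ t, HasDerivAt (fun s => M (Q s)) (M (Q' t)) t :=
    fun t => (M.hasFDerivAt.comp_hasDerivAt t (hQd t))
  have hMQ'd : ∀ t, HasDerivAt (fun s => M (Q' s)) (M (Q'' t)) t :=
    fun t => (M.hasFDerivAt.comp_hasDerivAt t (hQ'd t))
  -- Step 1: ⟪M Q, Q'⟫ = 0
  have hg : ∀ t, (⟪M (Q t), Q' t⟫ : ℝ) = 0 := by
    intro t
    have hd : HasDerivAt (fun s => (⟪M (Q s), Q s⟫ : ℝ))
        (⟪M (Q t), Q' t⟫ + ⟪M (Q' t), Q t⟫) t := (hMQd t).inner ℝ (hQd t)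
    have hc : (fun s => (⟪M (Q s), Q s⟫ : ℝ)) = fun _ => (1 : ℝ) := funext hcon
    rw [hc] at hd
    have h0 : (⟪M (Q t), Q' t⟫ : ℝ) + ⟪M (Q' t), Q t⟫ = 0 :=
      hd.unique (hasDerivAt_const t 1)
    have hsym : (⟪M (Q' t), Q t⟫ : ℝ) = ⟪M (Q t), Q' t⟫ := by
      rw [hM, real_inner_comm]
    rw [hsym] at h0; linarith
  -- inner with Q'' expanded
  have hQ''inner : ∀ t (x : V), (⟪x, Q'' t⟫ : ℝ) = μ t * ⟪x, M (Q t)⟫ + ν * ⟪x, Q t⟫ := by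
    intro t x
    rw [heq t, inner_add_right, real_inner_smul_right, real_inner_smul_right]
  -- Step 2: relation φ := ⟪M Q', Q'⟫ + μ ⟪M Q, M Q⟫ = -ν  (constant)
  have hφconst : ∀ t, (⟪M (Q' t), Q' t⟫ : ℝ) + μ t * ⟪M (Q t), M (Q t)⟫ = -ν := by
    intro t
    have hd : HasDerivAt (fun s => (⟪M (Q s), Q' s⟫ : ℝ))
        (⟪M (Q t), Q'' t⟫ + ⟪M (Q' t), Q' t⟫) t := (hMQd t).inner ℝ (hQ'd t)
    have hc : (fun s => (⟪M (Q s), Q' s⟫ : ℝ)) = fun _ => (0 : ℝ) := funext hg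
    rw [hc] at hd
    have h0 : (⟪M (Q t), Q'' t⟫ : ℝ) + ⟪M (Q' t), Q' t⟫ = 0 :=
      hd.unique (hasDerivAt_const t 0)
    rw [hQ''inner t, hcon t] at h0
    linarith
  -- Step 3: μ' a + 4 μ b = 0 where a = ⟪MQ,MQ⟫, b = ⟪MQ', MQ⟫
  have hkey : ∀ t, deriv μ t * (⟪M (Q t), M (Q t)⟫ : ℝ)
      + 4 * μ t * ⟪M (Q' t), M (Q t)⟫ = 0 := by
    intro t
    have hd : HasDerivAt (fun s => (⟪M (Q' s), Q' s⟫ : ℝ) + μ s * ⟪M (Q s), M (Q s)⟫)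
        ((⟪M (Q' t), Q'' t⟫ + ⟪M (Q'' t), Q' t⟫)
          + (deriv μ t * ⟪M (Q t), M (Q t)⟫
            + μ t * (⟪M (Q t), M (Q' t)⟫ + ⟪M (Q' t), M (Q t)⟫))) t :=
      HasDerivAt.add ((hMQ'd t).inner ℝ (hQ'd t))
        ((hμ t).hasDerivAt.mul ((hMQd t).inner ℝ (hMQd t)))
    have hc : (fun s => (⟪M (Q' s), Q' s⟫ : ℝ) + μ s * ⟪M (Q s), M (Q s)⟫)
        = fun _ => (-ν : ℝ) := funext hφconst
    rw [hc] at hd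
    have h0 := hd.unique (hasDerivAt_const t (-ν))
    have hsym : (⟪M (Q'' t), Q' t⟫ : ℝ) = ⟪M (Q' t), Q'' t⟫ := by
      rw [hM, real_inner_comm]
    have h2 : (⟪M (Q' t), Q'' t⟫ : ℝ) = μ t * ⟪M (Q' t), M (Q t)⟫ := by
      rw [hQ''inner t]
      have hz : (⟪M (Q' t), Q t⟫ : ℝ) = 0 := by
        rw [hM, real_inner_comm]; exact hg t
      rw [hz]; ring
    have hcomm : μ t * (⟪M (Q t), M (Q' t)⟫ : ℝ) = μ t * ⟪M (Q' t), M (Q t)⟫ := by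
      rw [real_inner_comm]
    rw [hsym, h2] at h0
    nlinarith [h0, hcomm]
  -- Step 4: η has zero derivative
  set η : ℝ → ℝ := fun t => μ t * (⟪M (Q t), M (Q t)⟫ : ℝ) ^ 2 with hηdef
  have hηd : ∀ t, HasDerivAt η 0 t := by
    intro t
    have h1 : HasDerivAt (fun s => (⟪M (Q s), M (Q s)⟫ : ℝ))
        (⟪M (Q t), M (Q' t)⟫ + ⟪M (Q' t), M (Q t)⟫) t := (hMQd t).inner ℝ (hMQd t)
    have h2 := ((hμ t).hasDerivAt.mul (h1.pow 2))
    convert h2 using 1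
    · rfl
    · rfl
    · rfl
    have hcomm : (⟪M (Q t), M (Q' t)⟫ : ℝ) = ⟪M (Q' t), M (Q t)⟫ :=
      real_inner_comm _ _
    push_cast
    simp only [Pi.pow_apply]
    linear_combination (-(⟪M (Q t), M (Q t)⟫ : ℝ)) * hkey t
      - 2 * μ t * (⟪M (Q t), M (Q t)⟫ : ℝ) * hcomm
  exact is_const_of_deriv_eq_zero (fun t => (hηd t).differentiableAt)
    (fun t => (hηd t).deriv)
end

section
/- Let V be a real inner product space and M : V →L[ℝ] V a continuous linear map that is symmetric with respect to the inner product (⟪M x, y⟫ = ⟪x, M y⟫ for all x, y). Let ν be a real constant, μ : ℝ → ℝ, and Q : ℝ → V twice differentiable with ⟪M Q(t), Q(t)⟫ = 1, M Q(t) ≠ 0, and Q''(t) = μ(t) • M Q(t) + ν • Q(t) for all t. Fix t₀ and set η = μ(t₀) · ⟪M Q(t₀), M Q(t₀)⟫², and suppose μ(t) · ⟪M Q(t), M Q(t)⟫² = η for all t. Then the curve q(t) = M Q(t) is twice differentiable and satisfies, for all t: q''(t) = (η / ⟪q(t), q(t)⟫²) • M q(t) + ν • q(t). -/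
open scoped RealInnerProductSpace

/-- In the Jacobi problem `Q'' = μ • M Q + ν • Q` on the
ellipsoid `{⟪M Q, Q⟫ = 1}` with `M` symmetric and Joachimsthal constant
`η = μ ⟪M Q, M Q⟫²`, the image curve `q = M Q` is twice differentiable and
solves the intermediate problem `q'' = (η / ⟪q, q⟫²) • M q + ν • q`. -/
theorem stmt_10
    {V : Type*} [NormedAddCommGroup V] [InnerProductSpace ℝ V]
    (M : V →L[ℝ] V)
    (hM : ∀ x y : V, ⟪M x, y⟫ = ⟪x, M y⟫)
    (ν : ℝ) (μ : ℝ → ℝ)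
    (Q : ℝ → V)
    (hQ1 : Differentiable ℝ Q) (hQ2 : Differentiable ℝ (deriv Q))
    (hcon : ∀ t, ⟪M (Q t), Q t⟫ = (1 : ℝ))
    (hne : ∀ t, M (Q t) ≠ 0)
    (heq : ∀ t, deriv (deriv Q) t = μ t • M (Q t) + ν • Q t)
    (t₀ : ℝ) (η : ℝ) (hη₀ : η = μ t₀ * (⟪M (Q t₀), M (Q t₀)⟫ : ℝ) ^ 2)
    (hη : ∀ t, μ t * (⟪M (Q t), M (Q t)⟫ : ℝ) ^ 2 = η)
    (q : ℝ → V) (hq : ∀ t, q t = M (Q t)) :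
    Differentiable ℝ q ∧ Differentiable ℝ (deriv q) ∧
    ∀ t : ℝ,
      deriv (deriv q) t = (η / (⟪q t, q t⟫ : ℝ) ^ 2) • M (q t) + ν • q t := by
  have hqf : q = fun t => M (Q t) := funext hq
  subst hqf
  have hd1 : Differentiable ℝ (fun t => M (Q t)) := M.differentiable.comp hQ1
  have hq' : deriv (fun t => M (Q t)) = fun t => M (deriv Q t) := by
    funext t
    exact (M.hasFDerivAt.comp_hasDerivAt t (hQ1 t).hasDerivAt).deriv
  have hd2 : Differentiable ℝ (deriv (fun t => M (Q t))) := by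
    rw [hq']; exact M.differentiable.comp hQ2
  refine ⟨hd1, hd2, fun t => ?_⟩
  have hq'' : deriv (deriv (fun t => M (Q t))) t = M (deriv (deriv Q) t) := by
    rw [hq']
    exact (M.hasFDerivAt.comp_hasDerivAt t (hQ2 t).hasDerivAt).deriv
  have hinner : (⟪M (Q t), M (Q t)⟫ : ℝ) ≠ 0 := by
    exact (inner_self_ne_zero (𝕜 := ℝ)).2 (hne t)
  have hμ : μ t = η / (⟪M (Q t), M (Q t)⟫ : ℝ) ^ 2 := by
    field_simp
    exact hη t
  rw [hq'', heq t, map_add, map_smul, map_smul, ← hμ]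
end
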